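/- Let A be a unital C*-algebra and u, v ∈ A isometries with u·v = λ·v·u, |λ| = 1. Set p := 1 − u·v·v*·u* and p̄ := v·(1 − u·u*)·v*. Then p·(1 − p̄) = p − p̄ = 1 − v·v*. In particular, v is a unitary if and only if p·(1 − p̄) = 0. -/

import Mathlib

/-- For isometries `u, v` with `uv = λ•vu`, with `p := 1 - uvv*u*` and `p̄ := v(1-uu*)v*`,
one has `p(1-p̄) = p - p̄ = 1 - vv*`; in particular `v` is a unitary iff `p(1-p̄) = 0`. -/
theorem stmt_11 {A : Type*} [NormedRing A] [StarRing A] [CStarRing A]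
    [NormedAlgebra ℂ A] [StarModule ℂ A] [CompleteSpace A]
    (u v : A) (hu : star u * u = 1) (hv : star v * v = 1)
    (l : ℂ) (hl : ‖l‖ = 1) (huv : u * v = l • (v * u))
    (p pb : A)
    (hp : p = 1 - u * v * star v * star u)
    (hpb : pb = v * (1 - u * star u) * star v) :
    p * (1 - pb) = p - pb ∧ p - pb = 1 - v * star v ∧
    (v * star v = 1 ↔ p * (1 - pb) = 0) := by
  have hl1 : l * star l = 1 := by
    rw [Complex.star_def, Complex.mul_conj]
    norm_cast
    rw [Complex.normSq_eq_norm_sq, hl]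
    norm_num
  have key : u * v * star v * star u = v * u * star u * star v := by
    have h : (u * v) * star (u * v) = (l • (v * u)) * star (l • (v * u)) := by rw [huv]
    rw [star_smul, smul_mul_assoc, mul_smul_comm, smul_smul, star_mul, star_mul,
      hl1, one_smul] at h
    calc u * v * star v * star u = (u * v) * (star v * star u) := by noncomm_ring
      _ = (v * u) * (star u * star v) := h
      _ = v * u * star u * star v := by noncomm_ring
  have hppb : p * pb = pb := by
    rw [hp, hpb]
    have h0 : (u * v * star v * star u) * (v * (1 - u * star u) * star v) = 0 := by
      rw [key]
      have h1 : v * u * star u * star v * (v * (1 - u * star u) * star v)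
          = v * (u * star u * (star v * v) * (1 - u * star u)) * star v := by noncomm_ring
      rw [h1, hv, mul_one]
      have h2 : u * star u * (1 - u * star u) = u * star u - u * (star u * u) * star u := by
        noncomm_ring
      rw [h2, hu, mul_one, sub_self, mul_zero, zero_mul]
    rw [sub_mul, one_mul, h0, sub_zero]
  have hmain : p - pb = 1 - v * star v := by
    rw [hp, hpb, key]
    noncomm_ring
  refine ⟨?_, hmain, ?_⟩
  · rw [mul_sub, mul_one, hppb]
  · rw [mul_sub, mul_one, hppb, hmain, sub_eq_zero]
    constructor <;> intro h <;> [rw [h]; rw [← h]]
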